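/- arXiv:1706.01431 — 3 statements merged into one kernel-verified Lean document; each statement's English description precedes it below -/
import Mathlib

section
/- Let G be a finite group with 1 ∈ CD(G). Then G is indecomposable (G cannot be written as an internal direct product H × K with both H and K nontrivial) if and only if CD(G) is an indecomposable lattice (CD(G), ordered by inclusion, is not order-isomorphic to a Cartesian product L₁ × L₂ of lattices in which both L₁ and L₂ have more than one element). -/
open Pointwise

/-- The Chermak-Delgado measure of a subgroup: `m_G(H) = |H| * |C_G(H)|`. -/
noncomputable def cdMeasure {G : Type*} [Group G] (H : Subgroup G) : Nat :=
  Nat.card H * Nat.card (Subgroup.centralizer (H : Set G))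

/-- The Chermak-Delgado lattice of `G`: the subgroups of maximal Chermak-Delgado measure. -/
def CD (G : Type*) [Group G] : Set (Subgroup G) :=
  {H | ∀ K : Subgroup G, cdMeasure K ≤ cdMeasure H}

set_option linter.unusedSectionVars false
set_option maxHeartbeats 1000000

namespace CDAux


variable {G : Type} [Group G] [Fintype G]

lemma arith_max {a b n : ℕ} (hn : 0 < n) (ha : a ≤ n) (hb : b ≤ n) (h : n * n ≤ a * b) :
    a = n ∧ b = n := by
  constructor <;> nlinarith

lemma centralizer_bot : Subgroup.centralizer ((⊥ : Subgroup G) : Set G) = ⊤ := by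
  rw [eq_top_iff]
  intro x _
  rw [Subgroup.mem_centralizer_iff]
  intro h hh
  rw [Subgroup.coe_bot, Set.mem_singleton_iff] at hh
  subst hh; simp

lemma cdMeasure_bot : cdMeasure (⊥ : Subgroup G) = Nat.card G := by
  unfold cdMeasure
  rw [Subgroup.card_bot, one_mul, centralizer_bot, Subgroup.card_top]

section hbot
variable (hbot : (⊥ : Subgroup G) ∈ CD G)
include hbot

lemma measure_le (M : Subgroup G) : cdMeasure M ≤ Nat.card G := by
  have := hbot M; rwa [cdMeasure_bot] at this

lemma mem_CD_iff {M : Subgroup G} : M ∈ CD G ↔ cdMeasure M = Nat.card G := by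
  constructor
  · intro h
    refine le_antisymm (measure_le hbot M) ?_
    have := h ⊥; rwa [cdMeasure_bot] at this
  · intro h K
    rw [h]; exact measure_le hbot K

lemma top_mem_CD : (⊤ : Subgroup G) ∈ CD G := by
  rw [mem_CD_iff hbot]
  refine le_antisymm (measure_le hbot ⊤) ?_
  unfold cdMeasure
  rw [Subgroup.card_top]
  exact Nat.le_mul_of_pos_right _ Nat.card_pos

end hbot

lemma card_mul_card_le_sup_inf (M N : Subgroup G) :
    Nat.card M * Nat.card N ≤ Nat.card ↥(M ⊔ N) * Nat.card ↥(M ⊓ N) := by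
  classical
  set D : Subgroup ↥N := (M ⊓ N).subgroupOf N with hD
  set M' : Subgroup ↥(M ⊔ N) := M.subgroupOf (M ⊔ N) with hM'
  have key : ∀ a b : ↥N, (QuotientGroup.leftRel D) a b →
      (QuotientGroup.leftRel M') (Subgroup.inclusion (le_sup_right : N ≤ M ⊔ N) a)
        (Subgroup.inclusion le_sup_right b) := by
    intro a b hab
    rw [QuotientGroup.leftRel_apply] at hab ⊢
    have h1 : ((a⁻¹ * b : ↥N) : G) ∈ M ⊓ N := hab
    rw [Subgroup.mem_subgroupOf]
    have : (((Subgroup.inclusion (le_sup_right : N ≤ M ⊔ N) a)⁻¹ *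
        Subgroup.inclusion le_sup_right b : ↥(M ⊔ N)) : G) = ((a⁻¹ * b : ↥N) : G) := rfl
    rw [this]
    exact h1.1
  let F : ↥N ⧸ D → ↥(M ⊔ N) ⧸ M' := Quotient.map' (Subgroup.inclusion le_sup_right) key
  have hFinj : Function.Injective F := by
    intro x y
    refine Quotient.inductionOn₂' x y ?_
    intro a b hab
    have h1 : (QuotientGroup.leftRel M') (Subgroup.inclusion (le_sup_right : N ≤ M ⊔ N) a)
        (Subgroup.inclusion le_sup_right b) := Quotient.exact' hab
    apply Quotient.sound'
    rw [QuotientGroup.leftRel_apply] at h1 ⊢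
    rw [Subgroup.mem_subgroupOf] at h1 ⊢
    have he : (((Subgroup.inclusion (le_sup_right : N ≤ M ⊔ N) a)⁻¹ *
        Subgroup.inclusion le_sup_right b : ↥(M ⊔ N)) : G) = ((a⁻¹ * b : ↥N) : G) := rfl
    rw [he] at h1
    exact ⟨h1, SetLike.coe_mem _⟩
  have c1 : Nat.card ↥N = Nat.card (↥N ⧸ D) * Nat.card D :=
    Subgroup.card_eq_card_quotient_mul_card_subgroup D
  have c2 : Nat.card ↥(M ⊔ N) = Nat.card (↥(M ⊔ N) ⧸ M') * Nat.card M' :=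
    Subgroup.card_eq_card_quotient_mul_card_subgroup M'
  have c3 : Nat.card D = Nat.card ↥(M ⊓ N) :=
    Nat.card_congr (Subgroup.subgroupOfEquivOfLe inf_le_right).toEquiv
  have c4 : Nat.card M' = Nat.card M :=
    Nat.card_congr (Subgroup.subgroupOfEquivOfLe le_sup_left).toEquiv
  have c5 : Nat.card (↥N ⧸ D) ≤ Nat.card (↥(M ⊔ N) ⧸ M') :=
    Nat.card_le_card_of_injective F hFinj
  calc Nat.card M * Nat.card N
      = Nat.card (↥N ⧸ D) * (Nat.card M * Nat.card D) := by rw [c1]; ring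
    _ ≤ Nat.card (↥(M ⊔ N) ⧸ M') * (Nat.card M * Nat.card D) := Nat.mul_le_mul_right _ c5
    _ = Nat.card ↥(M ⊔ N) * Nat.card ↥(M ⊓ N) := by rw [c2, ← c3, ← c4]; ring

lemma inf_centralizer_le_centralizer_sup (M N : Subgroup G) :
    Subgroup.centralizer (M : Set G) ⊓ Subgroup.centralizer (N : Set G) ≤
      Subgroup.centralizer ((M ⊔ N : Subgroup G) : Set G) := by
  intro x hx
  obtain ⟨hx1, hx2⟩ := Subgroup.mem_inf.mp hx
  rw [Subgroup.mem_centralizer_iff] at hx1 hx2 ⊢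
  intro h hh
  have hsub : (M ⊔ N : Subgroup G) ≤ Subgroup.centralizer {x} := by
    apply sup_le
    · intro m hm
      rw [Subgroup.mem_centralizer_iff]
      intro y hy
      rw [Set.mem_singleton_iff] at hy
      subst hy
      exact (hx1 m hm).symm
    · intro m hm
      rw [Subgroup.mem_centralizer_iff]
      intro y hy
      rw [Set.mem_singleton_iff] at hy
      subst hy
      exact (hx2 m hm).symm
  have := hsub (SetLike.mem_coe.mp hh)
  rw [Subgroup.mem_centralizer_iff] at this
  exact (this x rfl).symm

lemma eq_one_of_mem_both {H K : Subgroup G} (hdis : H ⊓ K = ⊥) {x : G}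
    (hx : x ∈ H) (hx' : x ∈ K) : x = 1 := by
  have : x ∈ H ⊓ K := Subgroup.mem_inf.mpr ⟨hx, hx'⟩
  rw [hdis] at this
  exact Subgroup.mem_bot.mp this

/-- The set of products of elements of `A ≤ H` and `B ≤ K`, as a subgroup. -/
def prodSub {H K : Subgroup G} (hcomm : ∀ h ∈ H, ∀ k ∈ K, h * k = k * h)
    (A B : Subgroup G) (hA : A ≤ H) (hB : B ≤ K) : Subgroup G where
  carrier := {x | ∃ a ∈ A, ∃ b ∈ B, x = a * b}
  one_mem' := ⟨1, one_mem _, 1, one_mem _, (mul_one 1).symm⟩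
  mul_mem' := by
    rintro x y ⟨a, ha, b, hb, rfl⟩ ⟨a', ha', b', hb', rfl⟩
    refine ⟨a * a', mul_mem ha ha', b * b', mul_mem hb hb', ?_⟩
    have hc : b * a' = a' * b := (hcomm a' (hA ha') b (hB hb)).symm
    calc a * b * (a' * b') = a * (b * a') * b' := by group
      _ = a * (a' * b) * b' := by rw [hc]
      _ = a * a' * (b * b') := by group
  inv_mem' := by
    rintro x ⟨a, ha, b, hb, rfl⟩
    refine ⟨a⁻¹, inv_mem ha, b⁻¹, inv_mem hb, ?_⟩
    have hc : a⁻¹ * b⁻¹ = b⁻¹ * a⁻¹ := hcomm a⁻¹ (hA (inv_mem ha)) b⁻¹ (hB (inv_mem hb))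
    rw [mul_inv_rev, ← hc]

lemma mem_sup_iff {H K : Subgroup G} (hcomm : ∀ h ∈ H, ∀ k ∈ K, h * k = k * h)
    {A B : Subgroup G} (hA : A ≤ H) (hB : B ≤ K) {x : G} :
    x ∈ A ⊔ B ↔ ∃ a ∈ A, ∃ b ∈ B, x = a * b := by
  constructor
  · intro hx
    have hle : A ⊔ B ≤ prodSub hcomm A B hA hB := by
      apply sup_le
      · intro a ha; exact ⟨a, ha, 1, one_mem _, (mul_one a).symm⟩
      · intro b hb; exact ⟨1, one_mem _, b, hb, (one_mul b).symm⟩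
    exact hle hx
  · rintro ⟨a, ha, b, hb, rfl⟩
    exact mul_mem ((le_sup_left : A ≤ A ⊔ B) ha) ((le_sup_right : B ≤ A ⊔ B) hb)

lemma card_sup_eq {H K : Subgroup G} (hdis : H ⊓ K = ⊥)
    (hcomm : ∀ h ∈ H, ∀ k ∈ K, h * k = k * h)
    {A B : Subgroup G} (hA : A ≤ H) (hB : B ≤ K) :
    Nat.card ↥(A ⊔ B) = Nat.card A * Nat.card B := by
  rw [← Nat.card_prod]
  refine (Nat.card_congr (Equiv.ofBijective
    (fun p : ↥A × ↥B => (⟨(p.1 : G) * (p.2 : G),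
      mul_mem ((le_sup_left : A ≤ A ⊔ B) p.1.2) ((le_sup_right : B ≤ A ⊔ B) p.2.2)⟩ : ↥(A ⊔ B)))
    ⟨?_, ?_⟩)).symm
  · intro p q h
    have h' : (p.1 : G) * (p.2 : G) = (q.1 : G) * (q.2 : G) := Subtype.ext_iff.mp h
    have e2 : (q.1 : G)⁻¹ * p.1 = (q.2 : G) * (p.2 : G)⁻¹ := by
      calc (q.1 : G)⁻¹ * p.1 = (q.1 : G)⁻¹ * ((p.1 : G) * p.2) * (p.2 : G)⁻¹ := by group
        _ = (q.1 : G)⁻¹ * ((q.1 : G) * q.2) * (p.2 : G)⁻¹ := by rw [h']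
        _ = (q.2 : G) * (p.2 : G)⁻¹ := by group
    have h1 : (q.1 : G)⁻¹ * p.1 = 1 := by
      refine eq_one_of_mem_both hdis (hA (mul_mem (inv_mem q.1.2) p.1.2)) ?_
      rw [e2]
      exact hB (mul_mem q.2.2 (inv_mem p.2.2))
    have h2 : (q.2 : G) * (p.2 : G)⁻¹ = 1 := by rw [← e2]; exact h1
    have ha : (q.1 : G) = p.1 := inv_mul_eq_one.mp h1
    have hb : (q.2 : G) = p.2 := mul_inv_eq_one.mp h2
    exact Prod.ext (Subtype.ext ha.symm) (Subtype.ext hb.symm)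
  · rintro ⟨x, hx⟩
    obtain ⟨a, ha, b, hb, rfl⟩ := (mem_sup_iff hcomm hA hB).mp hx
    exact ⟨(⟨a, ha⟩, ⟨b, hb⟩), rfl⟩

lemma decomp {H K : Subgroup G} (hcomm : ∀ h ∈ H, ∀ k ∈ K, h * k = k * h)
    (hsup : H ⊔ K = ⊤) (g : G) : ∃ h ∈ H, ∃ k ∈ K, g = h * k := by
  have : g ∈ H ⊔ K := by rw [hsup]; trivial
  exact (mem_sup_iff hcomm le_rfl le_rfl).mp this

lemma decomp_unique {H K : Subgroup G} (hdis : H ⊓ K = ⊥) {h h' k k' : G}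
    (hh : h ∈ H) (hh' : h' ∈ H) (hk : k ∈ K) (hk' : k' ∈ K)
    (e : h * k = h' * k') : h = h' ∧ k = k' := by
  have e2 : h'⁻¹ * h = k' * k⁻¹ := by
    calc h'⁻¹ * h = h'⁻¹ * (h * k) * k⁻¹ := by group
      _ = h'⁻¹ * (h' * k') * k⁻¹ := by rw [e]
      _ = k' * k⁻¹ := by group
  have h1 : h'⁻¹ * h = 1 := by
    refine eq_one_of_mem_both hdis (mul_mem (inv_mem hh') hh) ?_
    rw [e2]; exact mul_mem hk' (inv_mem hk)
  have h2 : k' * k⁻¹ = 1 := by rw [← e2]; exact h1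
  exact ⟨(inv_mul_eq_one.mp h1).symm, (mul_inv_eq_one.mp h2).symm⟩

lemma proj_eq {H K : Subgroup G} (hdis : H ⊓ K = ⊥)
    (hcomm : ∀ h ∈ H, ∀ k ∈ K, h * k = k * h) {N : Subgroup G} (hN : N ≤ H) :
    (N ⊔ K) ⊓ H = N := by
  apply le_antisymm
  · intro x hx
    obtain ⟨hx1, hx2⟩ := Subgroup.mem_inf.mp hx
    obtain ⟨a, ha, b, hb, rfl⟩ := (mem_sup_iff hcomm hN le_rfl).mp hx1
    have hbH : b ∈ H := by
      have he : a⁻¹ * (a * b) = b := by group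
      rw [← he]; exact mul_mem (inv_mem (hN ha)) hx2
    have : b = 1 := eq_one_of_mem_both hdis hbH hb
    rw [this, mul_one]; exact ha
  · exact le_inf le_sup_left hN

/-- Conjugation by `g` as a monoid hom. -/
def cj (g : G) : G →* G := (MulAut.conj g).toMonoidHom

lemma cj_apply (g x : G) : cj g x = g * x * g⁻¹ := rfl

lemma cj_inj (g : G) : Function.Injective (cj g) := by
  intro a b h
  rw [cj_apply, cj_apply] at h
  exact mul_left_cancel (mul_right_cancel h)

lemma cj_surj (g : G) : Function.Surjective (cj g) :=
  fun x => ⟨g⁻¹ * x * g, by rw [cj_apply]; group⟩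

lemma map_cj_cancel (g : G) (N : Subgroup G) : (N.map (cj g)).map (cj g⁻¹) = N := by
  rw [Subgroup.map_map]
  have h : (cj g⁻¹).comp (cj g) = MonoidHom.id G := by
    ext x
    simp only [MonoidHom.comp_apply, cj_apply, MonoidHom.id_apply]
    group
  rw [h, Subgroup.map_id]

lemma map_cj_centralizer_le (g : G) (M : Subgroup G) :
    (Subgroup.centralizer (M : Set G)).map (cj g) ≤
      Subgroup.centralizer ((M.map (cj g) : Subgroup G) : Set G) := by
  intro x hx
  obtain ⟨c, hc, rfl⟩ := Subgroup.mem_map.mp hx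
  rw [Subgroup.mem_centralizer_iff]
  intro y hy
  rw [SetLike.mem_coe, Subgroup.mem_map] at hy
  obtain ⟨m, hm, rfl⟩ := hy
  rw [← map_mul, ← map_mul]
  congr 1
  rw [Subgroup.mem_centralizer_iff] at hc
  exact hc m hm

lemma map_cj_centralizer (g : G) (M : Subgroup G) :
    Subgroup.centralizer ((M.map (cj g) : Subgroup G) : Set G) =
      (Subgroup.centralizer (M : Set G)).map (cj g) := by
  apply le_antisymm _ (map_cj_centralizer_le g M)
  have h := map_cj_centralizer_le g⁻¹ (M.map (cj g))
  rw [map_cj_cancel] at h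
  have h2 := Subgroup.map_mono (f := cj g) h
  have h3 := map_cj_cancel g⁻¹ (Subgroup.centralizer ((M.map (cj g) : Subgroup G) : Set G))
  rw [inv_inv] at h3
  rw [h3] at h2
  exact h2

lemma cdMeasure_map_cj (g : G) (M : Subgroup G) : cdMeasure (M.map (cj g)) = cdMeasure M := by
  unfold cdMeasure
  rw [map_cj_centralizer]
  congr 1
  · exact (Nat.card_congr (Subgroup.equivMapOfInjective M (cj g) (cj_inj g)).toEquiv).symm
  · exact (Nat.card_congr (Subgroup.equivMapOfInjective
      (Subgroup.centralizer (M : Set G)) (cj g) (cj_inj g)).toEquiv).symm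

lemma map_cj_self {K : Subgroup G} {g : G} (hg : g ∈ K) : K.map (cj g) = K := by
  apply le_antisymm
  · intro x hx
    obtain ⟨k, hk, rfl⟩ := Subgroup.mem_map.mp hx
    show cj g k ∈ K
    rw [cj_apply]
    exact mul_mem (mul_mem hg hk) (inv_mem hg)
  · intro x hx
    refine Subgroup.mem_map.mpr ⟨g⁻¹ * x * g, mul_mem (mul_mem (inv_mem hg) hx) hg, ?_⟩
    rw [cj_apply]; group


section closure
variable (hbot : (⊥ : Subgroup G) ∈ CD G)
include hbot

lemma CD_closed {M N : Subgroup G} (hM : M ∈ CD G) (hN : N ∈ CD G) :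
    M ⊓ N ∈ CD G ∧ M ⊔ N ∈ CD G := by
  have hn : 0 < Nat.card G := Nat.card_pos
  have hMn := (mem_CD_iff hbot).mp hM
  have hNn := (mem_CD_iff hbot).mp hN
  have e1 := card_mul_card_le_sup_inf M N
  have e2 := card_mul_card_le_sup_inf (Subgroup.centralizer (M : Set G))
    (Subgroup.centralizer (N : Set G))
  have e3 : Nat.card ↥(Subgroup.centralizer (M : Set G) ⊔ Subgroup.centralizer (N : Set G)) ≤
      Nat.card ↥(Subgroup.centralizer ((M ⊓ N : Subgroup G) : Set G)) := by
    apply Subgroup.card_le_of_le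
    apply sup_le
    · exact Subgroup.centralizer_le (SetLike.coe_subset_coe.mpr inf_le_left)
    · exact Subgroup.centralizer_le (SetLike.coe_subset_coe.mpr inf_le_right)
  have e4 : Nat.card ↥(Subgroup.centralizer (M : Set G) ⊓ Subgroup.centralizer (N : Set G)) ≤
      Nat.card ↥(Subgroup.centralizer ((M ⊔ N : Subgroup G) : Set G)) :=
    Subgroup.card_le_of_le (inf_centralizer_le_centralizer_sup M N)
  have key : Nat.card G * Nat.card G ≤ cdMeasure (M ⊓ N) * cdMeasure (M ⊔ N) := by
    have h0 : Nat.card G * Nat.card G = cdMeasure M * cdMeasure N := by rw [hMn, hNn]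
    rw [h0]
    have h5 : Nat.card ↥(Subgroup.centralizer (M : Set G)) *
        Nat.card ↥(Subgroup.centralizer (N : Set G)) ≤
        Nat.card ↥(Subgroup.centralizer ((M ⊓ N : Subgroup G) : Set G)) *
        Nat.card ↥(Subgroup.centralizer ((M ⊔ N : Subgroup G) : Set G)) :=
      e2.trans (Nat.mul_le_mul e3 e4)
    calc cdMeasure M * cdMeasure N
        = (Nat.card M * Nat.card N) * (Nat.card ↥(Subgroup.centralizer (M : Set G)) *
            Nat.card ↥(Subgroup.centralizer (N : Set G))) := by unfold cdMeasure; ring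
      _ ≤ (Nat.card ↥(M ⊔ N) * Nat.card ↥(M ⊓ N)) *
            (Nat.card ↥(Subgroup.centralizer ((M ⊓ N : Subgroup G) : Set G)) *
            Nat.card ↥(Subgroup.centralizer ((M ⊔ N : Subgroup G) : Set G))) :=
          Nat.mul_le_mul e1 h5
      _ = cdMeasure (M ⊓ N) * cdMeasure (M ⊔ N) := by unfold cdMeasure; ring
  obtain ⟨h1, h2⟩ := arith_max hn (measure_le hbot (M ⊓ N)) (measure_le hbot (M ⊔ N)) key
  exact ⟨(mem_CD_iff hbot).mpr h1, (mem_CD_iff hbot).mpr h2⟩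

end closure


section BW
variable (hbot : (⊥ : Subgroup G) ∈ CD G)
include hbot

lemma BW {H K : Subgroup G} (hdis : H ⊓ K = ⊥) (hsup : H ⊔ K = ⊤)
    (hcomm : ∀ h ∈ H, ∀ k ∈ K, h * k = k * h) (hHn : H.Normal) (hKn : K.Normal)
    {M : Subgroup G} (hM : M ∈ CD G) :
    ((M ⊔ K) ⊓ H) ∈ CD G ∧ ((M ⊔ H) ⊓ K) ∈ CD G ∧ ((M ⊔ K) ⊓ H) ⊔ ((M ⊔ H) ⊓ K) = M := by
  haveI := hHn; haveI := hKn
  set A : Subgroup G := (M ⊔ K) ⊓ H with hA_def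
  set B : Subgroup G := (M ⊔ H) ⊓ K with hB_def
  have hAH : A ≤ H := inf_le_right
  have hBK : B ≤ K := inf_le_right
  have memA : ∀ {a : G}, a ∈ A ↔ (a ∈ H ∧ ∃ k ∈ K, a * k ∈ M) := by
    intro a
    constructor
    · intro ha
      obtain ⟨h1, h2⟩ := Subgroup.mem_inf.mp ha
      refine ⟨h2, ?_⟩
      have h3 : a ∈ ((M ⊔ K : Subgroup G) : Set G) := h1
      rw [Subgroup.mul_normal M K] at h3
      obtain ⟨m, hm, kk, hkk, hmk⟩ := Set.mem_mul.mp h3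
      refine ⟨kk⁻¹, inv_mem hkk, ?_⟩
      have : a * kk⁻¹ = m := by rw [← hmk]; group
      rw [this]; exact hm
    · rintro ⟨haH, k, hk, hak⟩
      refine Subgroup.mem_inf.mpr ⟨?_, haH⟩
      have he : a = (a * k) * k⁻¹ := by group
      rw [he]
      exact mul_mem ((le_sup_left : M ≤ M ⊔ K) hak) ((le_sup_right : K ≤ M ⊔ K) (inv_mem hk))
  have memB : ∀ {b : G}, b ∈ B ↔ (b ∈ K ∧ ∃ h ∈ H, b * h ∈ M) := by
    intro b
    constructor
    · intro hb
      obtain ⟨h1, h2⟩ := Subgroup.mem_inf.mp hb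
      refine ⟨h2, ?_⟩
      have h3 : b ∈ ((M ⊔ H : Subgroup G) : Set G) := h1
      rw [Subgroup.mul_normal M H] at h3
      obtain ⟨m, hm, hh, hhh, hmh⟩ := Set.mem_mul.mp h3
      refine ⟨hh⁻¹, inv_mem hhh, ?_⟩
      have : b * hh⁻¹ = m := by rw [← hmh]; group
      rw [this]; exact hm
    · rintro ⟨hbK, h, hh, hbh⟩
      refine Subgroup.mem_inf.mpr ⟨?_, hbK⟩
      have he : b = (b * h) * h⁻¹ := by group
      rw [he]
      exact mul_mem ((le_sup_left : M ≤ M ⊔ H) hbh) ((le_sup_right : H ≤ M ⊔ H) (inv_mem hh))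
  have hMle : M ≤ A ⊔ B := by
    intro g hg
    obtain ⟨h, hh, k, hk, rfl⟩ := decomp hcomm hsup g
    have hA1 : h ∈ A := memA.mpr ⟨hh, k, hk, hg⟩
    have hB1 : k ∈ B := memB.mpr ⟨hk, h, hh, by rw [← hcomm h hh k hk]; exact hg⟩
    exact mul_mem ((le_sup_left : A ≤ A ⊔ B) hA1) ((le_sup_right : B ≤ A ⊔ B) hB1)
  have hKCH : K ≤ Subgroup.centralizer (H : Set G) := by
    intro k hk
    rw [Subgroup.mem_centralizer_iff]
    intro h hh
    exact hcomm h hh k hk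
  have hHCK : H ≤ Subgroup.centralizer (K : Set G) := by
    intro h hh
    rw [Subgroup.mem_centralizer_iff]
    intro k hk
    exact (hcomm h hh k hk).symm
  have hKCA : K ≤ Subgroup.centralizer (A : Set G) :=
    le_trans hKCH (Subgroup.centralizer_le (SetLike.coe_subset_coe.mpr hAH))
  have hHCB : H ≤ Subgroup.centralizer (B : Set G) :=
    le_trans hHCK (Subgroup.centralizer_le (SetLike.coe_subset_coe.mpr hBK))
  have comp : ∀ x ∈ Subgroup.centralizer (M : Set G), ∀ hx kx : G, hx ∈ H → kx ∈ K →
      x = hx * kx →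
      hx ∈ Subgroup.centralizer (A : Set G) ∧ kx ∈ Subgroup.centralizer (B : Set G) := by
    intro x hxc hx kx hhx hkx hxe
    rw [Subgroup.mem_centralizer_iff] at hxc
    constructor
    · rw [Subgroup.mem_centralizer_iff]
      intro a ha
      rw [SetLike.mem_coe] at ha
      obtain ⟨haH, k, hk, hakM⟩ := memA.mp ha
      have hcent : (a * k) * x = x * (a * k) := hxc (a * k) hakM
      have e1 : x * (a * k) = (hx * a) * (kx * k) := by
        rw [hxe]
        have h1 : kx * a = a * kx := (hcomm a haH kx hkx).symm
        calc hx * kx * (a * k) = hx * (kx * a) * k := by group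
          _ = hx * (a * kx) * k := by rw [h1]
          _ = (hx * a) * (kx * k) := by group
      have e2 : (a * k) * x = (a * hx) * (k * kx) := by
        rw [hxe]
        have h1 : k * hx = hx * k := (hcomm hx hhx k hk).symm
        calc a * k * (hx * kx) = a * (k * hx) * kx := by group
          _ = a * (hx * k) * kx := by rw [h1]
          _ = (a * hx) * (k * kx) := by group
      have e3 : (hx * a) * (kx * k) = (a * hx) * (k * kx) := by
        rw [← e1, ← e2]; exact hcent.symm
      obtain ⟨q1, q2⟩ := decomp_unique hdis (mul_mem hhx haH) (mul_mem haH hhx)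
        (mul_mem hkx hk) (mul_mem hk hkx) e3
      exact q1.symm
    · rw [Subgroup.mem_centralizer_iff]
      intro b hb
      rw [SetLike.mem_coe] at hb
      obtain ⟨hbK, h', hh', hbhM⟩ := memB.mp hb
      have hcent : (b * h') * x = x * (b * h') := hxc (b * h') hbhM
      have e1 : x * (b * h') = (hx * h') * (kx * b) := by
        rw [hxe]
        have h1 : h' * (kx * b) = (kx * b) * h' := hcomm h' hh' (kx * b) (mul_mem hkx hbK)
        calc hx * kx * (b * h') = hx * ((kx * b) * h') := by group
          _ = hx * (h' * (kx * b)) := by rw [← h1]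
          _ = (hx * h') * (kx * b) := by group
      have e2 : (b * h') * x = (h' * hx) * (b * kx) := by
        rw [hxe]
        have h1 : (h' * hx) * b = b * (h' * hx) := hcomm (h' * hx) (mul_mem hh' hhx) b hbK
        calc b * h' * (hx * kx) = b * (h' * hx) * kx := by group
          _ = (h' * hx) * b * kx := by rw [← h1]
          _ = (h' * hx) * (b * kx) := by group
      have e3 : (hx * h') * (kx * b) = (h' * hx) * (b * kx) := by
        rw [← e1, ← e2]; exact hcent.symm
      obtain ⟨q1, q2⟩ := decomp_unique hdis (mul_mem hhx hh') (mul_mem hh' hhx)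
        (mul_mem hkx hbK) (mul_mem hbK hkx) e3
      exact q2.symm
  have cent_M_eq : Subgroup.centralizer (M : Set G) =
      (Subgroup.centralizer (A : Set G) ⊓ H) ⊔ (Subgroup.centralizer (B : Set G) ⊓ K) := by
    apply le_antisymm
    · intro x hx
      obtain ⟨hx1, hh1, kx1, hk1, rfl⟩ := decomp hcomm hsup x
      obtain ⟨c1, c2⟩ := comp _ hx hx1 kx1 hh1 hk1 rfl
      exact mul_mem
        (Subgroup.mem_sup_left (Subgroup.mem_inf.mpr ⟨c1, hh1⟩))
        (Subgroup.mem_sup_right (Subgroup.mem_inf.mpr ⟨c2, hk1⟩))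
    · apply sup_le
      · intro y hy
        obtain ⟨hyCA, hyH⟩ := Subgroup.mem_inf.mp hy
        have hy2 : y ∈ Subgroup.centralizer (A : Set G) ⊓ Subgroup.centralizer (B : Set G) :=
          Subgroup.mem_inf.mpr ⟨hyCA, hHCB hyH⟩
        exact Subgroup.centralizer_le (SetLike.coe_subset_coe.mpr hMle)
          (inf_centralizer_le_centralizer_sup A B hy2)
      · intro y hy
        obtain ⟨hyCB, hyK⟩ := Subgroup.mem_inf.mp hy
        have hy2 : y ∈ Subgroup.centralizer (A : Set G) ⊓ Subgroup.centralizer (B : Set G) :=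
          Subgroup.mem_inf.mpr ⟨hKCA hyK, hyCB⟩
        exact Subgroup.centralizer_le (SetLike.coe_subset_coe.mpr hMle)
          (inf_centralizer_le_centralizer_sup A B hy2)
  have cent_A_eq : Subgroup.centralizer (A : Set G) =
      (Subgroup.centralizer (A : Set G) ⊓ H) ⊔ K := by
    apply le_antisymm
    · intro x hx
      obtain ⟨hx1, hh1, kx1, hk1, rfl⟩ := decomp hcomm hsup x
      have h1 : hx1 ∈ Subgroup.centralizer (A : Set G) := by
        have h2 := mul_mem hx (inv_mem (hKCA hk1))
        rwa [show hx1 * kx1 * kx1⁻¹ = hx1 from by group] at h2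
      exact mul_mem
        (Subgroup.mem_sup_left (Subgroup.mem_inf.mpr ⟨h1, hh1⟩))
        (Subgroup.mem_sup_right hk1)
    · exact sup_le inf_le_left hKCA
  have cent_B_eq : Subgroup.centralizer (B : Set G) =
      H ⊔ (Subgroup.centralizer (B : Set G) ⊓ K) := by
    apply le_antisymm
    · intro x hx
      obtain ⟨hx1, hh1, kx1, hk1, rfl⟩ := decomp hcomm hsup x
      have h1 : kx1 ∈ Subgroup.centralizer (B : Set G) := by
        have h2 := mul_mem (inv_mem (hHCB hh1)) hx
        rwa [show hx1⁻¹ * (hx1 * kx1) = kx1 from by group] at h2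
      exact mul_mem
        (Subgroup.mem_sup_left hh1)
        (Subgroup.mem_sup_right (Subgroup.mem_inf.mpr ⟨h1, hk1⟩))
    · exact sup_le hHCB inf_le_left
  -- cardinalities
  have c1 : Nat.card ↥(A ⊔ B) = Nat.card A * Nat.card B :=
    card_sup_eq hdis hcomm hAH hBK
  have c2 : Nat.card ↥(Subgroup.centralizer (M : Set G)) =
      Nat.card ↥(Subgroup.centralizer (A : Set G) ⊓ H) *
      Nat.card ↥(Subgroup.centralizer (B : Set G) ⊓ K) := by
    rw [cent_M_eq]
    exact card_sup_eq hdis hcomm inf_le_right inf_le_right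
  have c3 : Nat.card ↥(Subgroup.centralizer (A : Set G)) =
      Nat.card ↥(Subgroup.centralizer (A : Set G) ⊓ H) * Nat.card K := by
    conv_lhs => rw [cent_A_eq]
    exact card_sup_eq hdis hcomm inf_le_right le_rfl
  have c4 : Nat.card ↥(Subgroup.centralizer (B : Set G)) =
      Nat.card H * Nat.card ↥(Subgroup.centralizer (B : Set G) ⊓ K) := by
    conv_lhs => rw [cent_B_eq]
    exact card_sup_eq hdis hcomm le_rfl inf_le_right
  have c5 : Nat.card G = Nat.card H * Nat.card K := by
    rw [← Subgroup.card_top (G := G), ← hsup]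
    exact card_sup_eq hdis hcomm le_rfl le_rfl
  have c6 : cdMeasure M = Nat.card G := (mem_CD_iff hbot).mp hM
  have c7 : Nat.card M ≤ Nat.card A * Nat.card B := c1 ▸ Subgroup.card_le_of_le hMle
  have hA_measure : cdMeasure A = Nat.card A *
      (Nat.card ↥(Subgroup.centralizer (A : Set G) ⊓ H) * Nat.card K) := by
    unfold cdMeasure; rw [c3]
  have hB_measure : cdMeasure B = Nat.card B *
      (Nat.card H * Nat.card ↥(Subgroup.centralizer (B : Set G) ⊓ K)) := by
    unfold cdMeasure; rw [c4]
  have hM_measure : Nat.card M *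
      (Nat.card ↥(Subgroup.centralizer (A : Set G) ⊓ H) *
       Nat.card ↥(Subgroup.centralizer (B : Set G) ⊓ K)) = Nat.card H * Nat.card K := by
    have h := c6
    unfold cdMeasure at h
    rw [c2] at h
    rw [c5] at h
    exact h
  have hprod : Nat.card G * Nat.card G ≤ cdMeasure A * cdMeasure B := by
    rw [hA_measure, hB_measure, c5]
    calc (Nat.card H * Nat.card K) * (Nat.card H * Nat.card K)
        = (Nat.card M *
            (Nat.card ↥(Subgroup.centralizer (A : Set G) ⊓ H) *
             Nat.card ↥(Subgroup.centralizer (B : Set G) ⊓ K))) *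
          (Nat.card H * Nat.card K) := by rw [hM_measure]
      _ ≤ ((Nat.card A * Nat.card B) *
            (Nat.card ↥(Subgroup.centralizer (A : Set G) ⊓ H) *
             Nat.card ↥(Subgroup.centralizer (B : Set G) ⊓ K))) *
          (Nat.card H * Nat.card K) :=
          Nat.mul_le_mul_right _ (Nat.mul_le_mul_right _ c7)
      _ = (Nat.card A *
            (Nat.card ↥(Subgroup.centralizer (A : Set G) ⊓ H) * Nat.card K)) *
          (Nat.card B *
            (Nat.card H * Nat.card ↥(Subgroup.centralizer (B : Set G) ⊓ K))) := by ring
  obtain ⟨hAeq, hBeq⟩ := arith_max Nat.card_pos (measure_le hbot A) (measure_le hbot B) hprod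
  refine ⟨(mem_CD_iff hbot).mpr hAeq, (mem_CD_iff hbot).mpr hBeq, ?_⟩
  have h8 : Nat.card A * Nat.card B *
      (Nat.card ↥(Subgroup.centralizer (A : Set G) ⊓ H) *
       Nat.card ↥(Subgroup.centralizer (B : Set G) ⊓ K)) = Nat.card H * Nat.card K := by
    have hme : cdMeasure A * cdMeasure B = Nat.card G * Nat.card G := by rw [hAeq, hBeq]
    rw [hA_measure, hB_measure, c5] at hme
    have hpos : 0 < Nat.card H * Nat.card K := Nat.mul_pos Nat.card_pos Nat.card_pos
    apply Nat.eq_of_mul_eq_mul_right hpos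
    calc Nat.card A * Nat.card B *
        (Nat.card ↥(Subgroup.centralizer (A : Set G) ⊓ H) *
         Nat.card ↥(Subgroup.centralizer (B : Set G) ⊓ K)) * (Nat.card H * Nat.card K)
        = (Nat.card A *
            (Nat.card ↥(Subgroup.centralizer (A : Set G) ⊓ H) * Nat.card K)) *
          (Nat.card B *
            (Nat.card H * Nat.card ↥(Subgroup.centralizer (B : Set G) ⊓ K))) := by ring
      _ = (Nat.card H * Nat.card K) * (Nat.card H * Nat.card K) := hme
  have h9 : Nat.card M = Nat.card A * Nat.card B := by
    have hpos : 0 < Nat.card ↥(Subgroup.centralizer (A : Set G) ⊓ H) *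
        Nat.card ↥(Subgroup.centralizer (B : Set G) ⊓ K) :=
      Nat.mul_pos Nat.card_pos Nat.card_pos
    apply Nat.eq_of_mul_eq_mul_right hpos
    rw [hM_measure, ← h8]
  exact (Subgroup.eq_of_le_of_card_ge hMle (by rw [c1, ← h9])).symm

end BW

end CDAux

theorem stmt11 {G : Type} [Group G] [Fintype G] (hbot : (⊥ : Subgroup G) ∈ CD G) :
    (¬ ∃ H K : Subgroup G, H ≠ ⊥ ∧ K ≠ ⊥ ∧ H.Normal ∧ K.Normal ∧
        H ⊓ K = ⊥ ∧ H ⊔ K = ⊤) ↔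
    (∀ (L₁ L₂ : Type) [Lattice L₁] [Lattice L₂],
        (↥(CD G) ≃o (L₁ × L₂)) → Subsingleton L₁ ∨ Subsingleton L₂) := by
  classical
  constructor
  · -- group indecomposable → lattice indecomposable
    intro hne L₁ L₂ _ _ φ
    by_contra hcon
    push_neg at hcon
    obtain ⟨h1, h2⟩ := hcon
    have htop := CDAux.top_mem_CD hbot
    set bb : ↥(CD G) := ⟨⊥, hbot⟩ with hbb
    set tt : ↥(CD G) := ⟨⊤, htop⟩ with htt
    have hble : ∀ x : ↥(CD G), bb ≤ x := fun x => Subtype.coe_le_coe.mp bot_le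
    have htle : ∀ x : ↥(CD G), x ≤ tt := fun x => Subtype.coe_le_coe.mp le_top
    have hbL : ∀ z : L₁ × L₂, φ bb ≤ z := fun z => by
      have h := φ.monotone (hble (φ.symm z))
      rwa [φ.apply_symm_apply] at h
    have htL : ∀ z : L₁ × L₂, z ≤ φ tt := fun z => by
      have h := φ.monotone (htle (φ.symm z))
      rwa [φ.apply_symm_apply] at h
    have hinfT : ∀ (M N : ↥(CD G)) (hmn : (M : Subgroup G) ⊓ (N : Subgroup G) ∈ CD G),
        φ ⟨(M : Subgroup G) ⊓ N, hmn⟩ = φ M ⊓ φ N := by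
      intro M N hmn
      apply le_antisymm
      · exact le_inf (φ.monotone (Subtype.coe_le_coe.mp inf_le_left))
          (φ.monotone (Subtype.coe_le_coe.mp inf_le_right))
      · have k1 : φ.symm (φ M ⊓ φ N) ≤ M := by
          have h := φ.symm.monotone (inf_le_left (a := φ M) (b := φ N))
          rwa [φ.symm_apply_apply] at h
        have k2 : φ.symm (φ M ⊓ φ N) ≤ N := by
          have h := φ.symm.monotone (inf_le_right (a := φ M) (b := φ N))
          rwa [φ.symm_apply_apply] at h
        have k3 : φ.symm (φ M ⊓ φ N) ≤ ⟨(M : Subgroup G) ⊓ N, hmn⟩ :=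
          Subtype.coe_le_coe.mp (le_inf (Subtype.coe_le_coe.mpr k1) (Subtype.coe_le_coe.mpr k2))
        have h := φ.monotone k3
        rwa [φ.apply_symm_apply] at h
    have hsupT : ∀ (M N : ↥(CD G)) (hmn : (M : Subgroup G) ⊔ (N : Subgroup G) ∈ CD G),
        φ ⟨(M : Subgroup G) ⊔ N, hmn⟩ = φ M ⊔ φ N := by
      intro M N hmn
      apply le_antisymm
      · have k1 : M ≤ φ.symm (φ M ⊔ φ N) := by
          have h := φ.symm.monotone (le_sup_left (a := φ M) (b := φ N))
          rwa [φ.symm_apply_apply] at h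
        have k2 : N ≤ φ.symm (φ M ⊔ φ N) := by
          have h := φ.symm.monotone (le_sup_right (a := φ M) (b := φ N))
          rwa [φ.symm_apply_apply] at h
        have k3 : (⟨(M : Subgroup G) ⊔ N, hmn⟩ : ↥(CD G)) ≤ φ.symm (φ M ⊔ φ N) :=
          Subtype.coe_le_coe.mp (sup_le (Subtype.coe_le_coe.mpr k1) (Subtype.coe_le_coe.mpr k2))
        have h := φ.monotone k3
        rwa [φ.apply_symm_apply] at h
      · exact sup_le (φ.monotone (Subtype.coe_le_coe.mp le_sup_left))
          (φ.monotone (Subtype.coe_le_coe.mp le_sup_right))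
    set p0 := φ bb with hp0
    set p1 := φ tt with hp1
    set H' := φ.symm (p1.1, p0.2) with hH'
    set K' := φ.symm (p0.1, p1.2) with hK'
    set H : Subgroup G := (H' : Subgroup G) with hH
    set K : Subgroup G := (K' : Subgroup G) with hK
    have hHCD : H ∈ CD G := H'.2
    have hKCD : K ∈ CD G := K'.2
    have hφH : φ H' = (p1.1, p0.2) := φ.apply_symm_apply _
    have hφK : φ K' = (p0.1, p1.2) := φ.apply_symm_apply _
    have hb1t1 : p0.1 ≤ p1.1 := (hbL p1).1
    have hb2t2 : p0.2 ≤ p1.2 := (hbL p1).2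
    have hinf0 : H ⊓ K = ⊥ := by
      have hmem := (CDAux.CD_closed hbot hHCD hKCD).1
      have h := hinfT H' K' hmem
      rw [hφH, hφK] at h
      have heq : ((p1.1, p0.2) : L₁ × L₂) ⊓ (p0.1, p1.2) = p0 := by
        have e1 : p1.1 ⊓ p0.1 = p0.1 := inf_eq_right.mpr hb1t1
        have e2 : p0.2 ⊓ p1.2 = p0.2 := inf_eq_left.mpr hb2t2
        have : ((p1.1, p0.2) : L₁ × L₂) ⊓ (p0.1, p1.2) = (p1.1 ⊓ p0.1, p0.2 ⊓ p1.2) := rfl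
        rw [this, e1, e2]
      rw [heq] at h
      have h2 : (⟨H ⊓ K, hmem⟩ : ↥(CD G)) = bb := φ.injective h
      exact Subtype.ext_iff.mp h2
    have hsup0 : H ⊔ K = ⊤ := by
      have hmem := (CDAux.CD_closed hbot hHCD hKCD).2
      have h := hsupT H' K' hmem
      rw [hφH, hφK] at h
      have heq : ((p1.1, p0.2) : L₁ × L₂) ⊔ (p0.1, p1.2) = p1 := by
        have e1 : p1.1 ⊔ p0.1 = p1.1 := sup_eq_left.mpr hb1t1
        have e2 : p0.2 ⊔ p1.2 = p1.2 := sup_eq_right.mpr hb2t2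
        have : ((p1.1, p0.2) : L₁ × L₂) ⊔ (p0.1, p1.2) = (p1.1 ⊔ p0.1, p0.2 ⊔ p1.2) := rfl
        rw [this, e1, e2]
      rw [heq] at h
      have h2 : (⟨H ⊔ K, hmem⟩ : ↥(CD G)) = tt := φ.injective h
      exact Subtype.ext_iff.mp h2
    have hHne : H ≠ ⊥ := by
      intro hbotH
      have hH'b : H' = bb := Subtype.ext hbotH
      have h3 : p1.1 = p0.1 := by
        have h := congrArg φ hH'b
        rw [hφH, ← hp0] at h
        have h4 := congrArg (fun z : L₁ × L₂ => z.1) h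
        simpa using h4
      apply @not_subsingleton L₁ h1
      have hall1 : ∀ c : L₁, c = p1.1 := fun c => by
        refine le_antisymm ((htL (c, p0.2)).1) ?_
        rw [h3]
        exact (hbL (c, p0.2)).1
      exact ⟨fun a b => by rw [hall1 a, hall1 b]⟩
    have hKne : K ≠ ⊥ := by
      intro hbotK
      have hK'b : K' = bb := Subtype.ext hbotK
      have h3 : p1.2 = p0.2 := by
        have h := congrArg φ hK'b
        rw [hφK, ← hp0] at h
        have h4 := congrArg (fun z : L₁ × L₂ => z.2) h
        simpa using h4
      apply @not_subsingleton L₂ h2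
      have hall2 : ∀ c : L₂, c = p1.2 := fun c => by
        refine le_antisymm ((htL (p0.1, c)).2) ?_
        rw [h3]
        exact (hbL (p0.1, c)).2
      exact ⟨fun a b => by rw [hall2 a, hall2 b]⟩
    have keyH : ∀ g ∈ K, H.map (CDAux.cj g) = H := by
      intro g hg
      set Hg : Subgroup G := H.map (CDAux.cj g) with hHg
      have hHgCD : Hg ∈ CD G := by
        rw [CDAux.mem_CD_iff hbot, CDAux.cdMeasure_map_cj]
        exact (CDAux.mem_CD_iff hbot).mp hHCD
      have hKg : K.map (CDAux.cj g) = K := CDAux.map_cj_self hg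
      have hi : Hg ⊓ K = ⊥ := by
        conv_lhs => rw [← hKg]
        rw [← Subgroup.map_inf _ _ _ (CDAux.cj_inj g), hinf0, Subgroup.map_bot]
      have hs : Hg ⊔ K = ⊤ := by
        conv_lhs => rw [← hKg]
        rw [← Subgroup.map_sup, hsup0]
        exact Subgroup.map_top_of_surjective _ (CDAux.cj_surj g)
      set Hg' : ↥(CD G) := ⟨Hg, hHgCD⟩ with hHg'
      have hmem : Hg ⊓ K ∈ CD G := hi.symm ▸ hbot
      have e1 := hinfT Hg' K' hmem
      rw [show (⟨(Hg' : Subgroup G) ⊓ K', hmem⟩ : ↥(CD G)) = bb from Subtype.ext hi, hφK] at e1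
      have c2 : p0.2 = (φ Hg').2 := by
        have h := congrArg Prod.snd e1
        rw [← hp0] at h
        rw [show ((φ Hg') ⊓ ((p0.1, p1.2) : L₁ × L₂)).2 = (φ Hg').2 ⊓ p1.2 from rfl] at h
        rw [inf_eq_left.mpr ((htL (φ Hg')).2)] at h
        exact h
      have hmem2 : Hg ⊔ K ∈ CD G := hs.symm ▸ htop
      have e2 := hsupT Hg' K' hmem2
      rw [show (⟨(Hg' : Subgroup G) ⊔ K', hmem2⟩ : ↥(CD G)) = tt from Subtype.ext hs, hφK] at e2
      have c1 : p1.1 = (φ Hg').1 := by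
        have h := congrArg Prod.fst e2
        rw [← hp1] at h
        rw [show ((φ Hg') ⊔ ((p0.1, p1.2) : L₁ × L₂)).1 = (φ Hg').1 ⊔ p0.1 from rfl] at h
        rw [sup_eq_left.mpr ((hbL (φ Hg')).1)] at h
        exact h
      have hfin : φ Hg' = φ H' := by
        rw [hφH]
        exact Prod.ext c1.symm c2.symm
      have := φ.injective hfin
      exact Subtype.ext_iff.mp this
    have keyK : ∀ g ∈ H, K.map (CDAux.cj g) = K := by
      intro g hg
      set Kg : Subgroup G := K.map (CDAux.cj g) with hKg
      have hKgCD : Kg ∈ CD G := by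
        rw [CDAux.mem_CD_iff hbot, CDAux.cdMeasure_map_cj]
        exact (CDAux.mem_CD_iff hbot).mp hKCD
      have hHg : H.map (CDAux.cj g) = H := CDAux.map_cj_self hg
      have hi : Kg ⊓ H = ⊥ := by
        conv_lhs => rw [← hHg]
        rw [← Subgroup.map_inf _ _ _ (CDAux.cj_inj g), inf_comm, hinf0, Subgroup.map_bot]
      have hs : Kg ⊔ H = ⊤ := by
        conv_lhs => rw [← hHg]
        rw [← Subgroup.map_sup, sup_comm, hsup0]
        exact Subgroup.map_top_of_surjective _ (CDAux.cj_surj g)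
      set Kg' : ↥(CD G) := ⟨Kg, hKgCD⟩ with hKg'
      have hmem : Kg ⊓ H ∈ CD G := hi.symm ▸ hbot
      have e1 := hinfT Kg' H' hmem
      rw [show (⟨(Kg' : Subgroup G) ⊓ H', hmem⟩ : ↥(CD G)) = bb from Subtype.ext hi, hφH] at e1
      have c1 : p0.1 = (φ Kg').1 := by
        have h := congrArg Prod.fst e1
        rw [← hp0] at h
        rw [show ((φ Kg') ⊓ ((p1.1, p0.2) : L₁ × L₂)).1 = (φ Kg').1 ⊓ p1.1 from rfl] at h
        rw [inf_eq_left.mpr ((htL (φ Kg')).1)] at h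
        exact h
      have hmem2 : Kg ⊔ H ∈ CD G := hs.symm ▸ htop
      have e2 := hsupT Kg' H' hmem2
      rw [show (⟨(Kg' : Subgroup G) ⊔ H', hmem2⟩ : ↥(CD G)) = tt from Subtype.ext hs, hφH] at e2
      have c2 : p1.2 = (φ Kg').2 := by
        have h := congrArg Prod.snd e2
        rw [← hp1] at h
        rw [show ((φ Kg') ⊔ ((p1.1, p0.2) : L₁ × L₂)).2 = (φ Kg').2 ⊔ p0.2 from rfl] at h
        rw [sup_eq_left.mpr ((hbL (φ Kg')).2)] at h
        exact h
      have hfin : φ Kg' = φ K' := by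
        rw [hφK]
        exact Prod.ext c1.symm c2.symm
      have := φ.injective hfin
      exact Subtype.ext_iff.mp this
    have hHnormal : H.Normal := by
      rw [← Subgroup.normalizer_eq_top_iff, eq_top_iff, ← hsup0]
      apply sup_le Subgroup.le_normalizer
      intro g hg
      rw [Subgroup.mem_normalizer_iff]
      intro x
      constructor
      · intro hx
        rw [← keyH g hg]
        exact Subgroup.mem_map.mpr ⟨x, hx, rfl⟩
      · intro hx
        rw [← keyH g hg] at hx
        obtain ⟨y, hy, hyx⟩ := Subgroup.mem_map.mp hx
        have h2 : g * y * g⁻¹ = g * x * g⁻¹ := hyx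
        have : y = x := mul_left_cancel (mul_right_cancel h2)
        rwa [← this]
    have hKnormal : K.Normal := by
      rw [← Subgroup.normalizer_eq_top_iff, eq_top_iff, ← hsup0]
      refine sup_le ?_ Subgroup.le_normalizer
      intro g hg
      rw [Subgroup.mem_normalizer_iff]
      intro x
      constructor
      · intro hx
        rw [← keyK g hg]
        exact Subgroup.mem_map.mpr ⟨x, hx, rfl⟩
      · intro hx
        rw [← keyK g hg] at hx
        obtain ⟨y, hy, hyx⟩ := Subgroup.mem_map.mp hx
        have h2 : g * y * g⁻¹ = g * x * g⁻¹ := hyx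
        have : y = x := mul_left_cancel (mul_right_cancel h2)
        rwa [← this]
    exact hne ⟨H, K, hHne, hKne, hHnormal, hKnormal, hinf0, hsup0⟩
  · -- lattice indecomposable → group indecomposable
    intro hall
    rintro ⟨H, K, hHne, hKne, hHn, hKn, hdis, hsup⟩
    have hcomm : ∀ h ∈ H, ∀ k ∈ K, h * k = k * h := fun h hh k hk =>
      Subgroup.commute_of_normal_of_disjoint H K hHn hKn (disjoint_iff.mpr hdis) h k hh hk
    have hKC : K ≤ Subgroup.centralizer (H : Set G) := by
      intro k hk; rw [Subgroup.mem_centralizer_iff]; intro h hh; exact hcomm h hh k hk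
    have hHC : H ≤ Subgroup.centralizer (K : Set G) := by
      intro h hh; rw [Subgroup.mem_centralizer_iff]; intro k hk; exact (hcomm h hh k hk).symm
    have hcard : Nat.card G = Nat.card H * Nat.card K := by
      rw [← Subgroup.card_top (G := G), ← hsup]
      exact CDAux.card_sup_eq hdis hcomm le_rfl le_rfl
    have hHCD : H ∈ CD G := by
      rw [CDAux.mem_CD_iff hbot]
      refine le_antisymm (CDAux.measure_le hbot H) ?_
      unfold cdMeasure
      rw [hcard]
      exact Nat.mul_le_mul_left _ (Subgroup.card_le_of_le hKC)
    have hKCD : K ∈ CD G := by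
      rw [CDAux.mem_CD_iff hbot]
      refine le_antisymm (CDAux.measure_le hbot K) ?_
      unfold cdMeasure
      rw [hcard, mul_comm]
      exact Nat.mul_le_mul_left _ (Subgroup.card_le_of_le hHC)
    have hdis' : K ⊓ H = ⊥ := by rw [inf_comm]; exact hdis
    have hcomm' : ∀ k ∈ K, ∀ h ∈ H, k * h = h * k := fun k hk h hh => (hcomm h hh k hk).symm
    set S1 : Sublattice (Subgroup G) :=
      ⟨{N | N ∈ CD G ∧ N ≤ H},
        fun a ha b hb => ⟨(CDAux.CD_closed hbot ha.1 hb.1).2, sup_le ha.2 hb.2⟩,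
        fun a ha b hb => ⟨(CDAux.CD_closed hbot ha.1 hb.1).1, le_trans inf_le_left ha.2⟩⟩
      with hS1
    set S2 : Sublattice (Subgroup G) :=
      ⟨{N | N ∈ CD G ∧ N ≤ K},
        fun a ha b hb => ⟨(CDAux.CD_closed hbot ha.1 hb.1).2, sup_le ha.2 hb.2⟩,
        fun a ha b hb => ⟨(CDAux.CD_closed hbot ha.1 hb.1).1, le_trans inf_le_left ha.2⟩⟩
      with hS2
    have hBW := fun {M : Subgroup G} (hM : M ∈ CD G) =>
      CDAux.BW hbot hdis hsup hcomm hHn hKn hM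
    have e : ↥(CD G) ≃o ↥S1 × ↥S2 :=
      { toFun := fun M => (⟨((M : Subgroup G) ⊔ K) ⊓ H, ⟨(hBW M.2).1, inf_le_right⟩⟩,
                           ⟨((M : Subgroup G) ⊔ H) ⊓ K, ⟨(hBW M.2).2.1, inf_le_right⟩⟩)
        invFun := fun p => ⟨(p.1 : Subgroup G) ⊔ (p.2 : Subgroup G),
          (CDAux.CD_closed hbot p.1.2.1 p.2.2.1).2⟩
        left_inv := fun M => Subtype.ext (hBW M.2).2.2
        right_inv := fun p => by
          obtain ⟨⟨N₁, hN₁⟩, ⟨N₂, hN₂⟩⟩ := p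
          refine Prod.ext (Subtype.ext ?_) (Subtype.ext ?_)
          · show ((N₁ ⊔ N₂) ⊔ K) ⊓ H = N₁
            have h2 : N₂ ⊔ K = K := sup_eq_right.mpr hN₂.2
            rw [sup_assoc, h2]
            exact CDAux.proj_eq hdis hcomm hN₁.2
          · show ((N₁ ⊔ N₂) ⊔ H) ⊓ K = N₂
            have h1 : (N₁ ⊔ N₂) ⊔ H = N₂ ⊔ H := by
              rw [sup_comm N₁ N₂, sup_assoc, sup_eq_right.mpr hN₁.2]
            rw [h1]
            exact CDAux.proj_eq hdis' hcomm' hN₂.2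
        map_rel_iff' := by
          intro M N
          constructor
          · intro h
            have h1 : ((M : Subgroup G) ⊔ K) ⊓ H ≤ ((N : Subgroup G) ⊔ K) ⊓ H := h.1
            have h2 : ((M : Subgroup G) ⊔ H) ⊓ K ≤ ((N : Subgroup G) ⊔ H) ⊓ K := h.2
            refine Subtype.coe_le_coe.mp ?_
            calc (M : Subgroup G)
                = (((M : Subgroup G) ⊔ K) ⊓ H) ⊔ (((M : Subgroup G) ⊔ H) ⊓ K) :=
                  (hBW M.2).2.2.symm
              _ ≤ (((N : Subgroup G) ⊔ K) ⊓ H) ⊔ (((N : Subgroup G) ⊔ H) ⊓ K) :=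
                  sup_le_sup h1 h2
              _ = (N : Subgroup G) := (hBW N.2).2.2
          · intro h
            have h' : (M : Subgroup G) ≤ N := h
            exact ⟨inf_le_inf_right H (sup_le_sup_right h' K),
              inf_le_inf_right K (sup_le_sup_right h' H)⟩ }
    rcases hall ↥S1 ↥S2 e with hs | hs
    · have h0 : ((⟨⊥, ⟨hbot, bot_le⟩⟩ : ↥S1) : Subgroup G) =
          ((⟨H, ⟨hHCD, le_rfl⟩⟩ : ↥S1) : Subgroup G) := by
        rw [@Subsingleton.elim _ hs (⟨⊥, ⟨hbot, bot_le⟩⟩ : ↥S1) ⟨H, ⟨hHCD, le_rfl⟩⟩]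
      exact hHne h0.symm
    · have h0 : ((⟨⊥, ⟨hbot, bot_le⟩⟩ : ↥S2) : Subgroup G) =
          ((⟨K, ⟨hKCD, le_rfl⟩⟩ : ↥S2) : Subgroup G) := by
        rw [@Subsingleton.elim _ hs (⟨⊥, ⟨hbot, bot_le⟩⟩ : ↥S2) ⟨K, ⟨hKCD, le_rfl⟩⟩]
      exact hKne h0.symm
end

section
/- Let G be a finite group that is CD-minimal (1 ∈ CD(G) and G is indecomposable) but not CD-simple (CD(G) ≠ {1, G}). If B is a coatom of CD(G), then C_G(B) ≤ B, B is normal in G, and the index |G : B| is divisible by at least two distinct primes. -/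
open Pointwise Subgroup MulAction

set_option linter.unusedSectionVars false

section CDaux

variable {G : Type*} [Group G] [Fintype G]

lemma card_image_mul_card_inf (H K : Subgroup G) :
    Nat.card ((H : Set G).image ((↑) : G → G ⧸ K) : Set (G ⧸ K)) * Nat.card ↥(H ⊓ K) =
      Nat.card H := by
  classical
  have horb : MulAction.orbit ↥H ((1 : G) : G ⧸ K) = (H : Set G).image ((↑) : G → G ⧸ K) := by
    ext q
    simp only [MulAction.mem_orbit_iff, Set.mem_image, SetLike.mem_coe]
    constructor
    · rintro ⟨⟨h, hh⟩, rfl⟩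
      exact ⟨h, hh, by show _ = ((h * 1 : G) : G ⧸ K); rw [mul_one]⟩
    · rintro ⟨g, hg, rfl⟩
      exact ⟨⟨g, hg⟩, by show ((g * 1 : G) : G ⧸ K) = _; rw [mul_one]⟩
  have hstab : MulAction.stabilizer ↥H ((1 : G) : G ⧸ K) = (H ⊓ K).subgroupOf H := by
    ext ⟨h, hh⟩
    simp only [MulAction.mem_stabilizer_iff, Subgroup.mem_subgroupOf, Subgroup.mem_inf]
    change ((h * 1 : G) : G ⧸ K) = ((1 : G) : G ⧸ K) ↔ _
    rw [QuotientGroup.eq]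
    simp [hh]
  have hcongr := Nat.card_congr (MulAction.orbitProdStabilizerEquivGroup ↥H ((1 : G) : G ⧸ K))
  rw [Nat.card_prod, horb, hstab] at hcongr
  have hsub : Nat.card ((H ⊓ K).subgroupOf H) = Nat.card ↥(H ⊓ K) :=
    Nat.card_congr (Subgroup.subgroupOfEquivOfLe inf_le_left).toEquiv
  rw [hsub] at hcongr
  exact hcongr

lemma card_mul_inf (H K : Subgroup G) :
    Nat.card ((H : Set G) * (K : Set G) : Set G) * Nat.card ↥(H ⊓ K) =
      Nat.card H * Nat.card K := by
  rw [Subgroup.card_mul_eq_card_subgroup_mul_card_quotient K (H : Set G), mul_assoc,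
    card_image_mul_card_inf, mul_comm]

lemma centralizer_sup' (H K : Subgroup G) :
    Subgroup.centralizer ((H ⊔ K : Subgroup G) : Set G) =
      Subgroup.centralizer (H : Set G) ⊓ Subgroup.centralizer (K : Set G) := by
  apply le_antisymm
  · exact le_inf (Subgroup.centralizer_le (SetLike.coe_subset_coe.mpr le_sup_left))
      (Subgroup.centralizer_le (SetLike.coe_subset_coe.mpr le_sup_right))
  · intro x hx
    obtain ⟨hx1, hx2⟩ := Subgroup.mem_inf.mp hx
    rw [Subgroup.mem_centralizer_iff] at hx1 hx2 ⊢
    intro g hg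
    have hle : H ⊔ K ≤ Subgroup.centralizer {x} := by
      apply sup_le
      · intro h hh
        exact Subgroup.mem_centralizer_singleton_iff.mpr (hx1 h hh)
      · intro h hh
        exact Subgroup.mem_centralizer_singleton_iff.mpr (hx2 h hh)
    exact Subgroup.mem_centralizer_singleton_iff.mp (hle hg)

end CDaux

section CDmain

variable {G : Type*} [Group G] [Fintype G]

lemma centralizer_mul_subset (H K : Subgroup G) :
    ((Subgroup.centralizer (H : Set G) : Set G) * (Subgroup.centralizer (K : Set G) : Set G)
      : Set G) ⊆ (Subgroup.centralizer ((H ⊓ K : Subgroup G) : Set G) : Set G) := by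
  rintro - ⟨y, hy, z, hz, rfl⟩
  rw [SetLike.mem_coe, Subgroup.mem_centralizer_iff]
  intro g hg
  rw [SetLike.mem_coe, Subgroup.mem_inf] at hg
  have h1 : g * y = y * g := (SetLike.mem_coe.mp hy) g (SetLike.mem_coe.mpr hg.1)
  have h2 : g * z = z * g := (SetLike.mem_coe.mp hz) g (SetLike.mem_coe.mpr hg.2)
  calc g * (y * z) = (g * y) * z := by rw [mul_assoc]
    _ = y * (g * z) := by rw [h1, mul_assoc]
    _ = (y * z) * g := by rw [h2, mul_assoc]

lemma mul_subset_sup (H K : Subgroup G) :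
    ((H : Set G) * (K : Set G) : Set G) ⊆ ((H ⊔ K : Subgroup G) : Set G) := by
  rintro - ⟨y, hy, z, hz, rfl⟩
  exact mul_mem (le_sup_left (a := H) hy) (le_sup_right (b := K) hz)

lemma nat_both_eq {x y M : ℕ} (hx : x ≤ M) (hy : y ≤ M) (h : x * y = M * M) (hM : 0 < M) :
    x = M ∧ y = M := by
  have hxM : M ≤ x := by
    have h1 : M * M ≤ x * M := by
      calc M * M = x * y := h.symm
        _ ≤ x * M := Nat.mul_le_mul_left x hy
    exact Nat.le_of_mul_le_mul_right h1 hM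
  have hx' : x = M := le_antisymm hx hxM
  refine ⟨hx', ?_⟩
  subst hx'
  exact (Nat.eq_of_mul_eq_mul_left hM h.symm).symm

lemma sup_CD {H K : Subgroup G} (hH : H ∈ CD G) (hK : K ∈ CD G) :
    H ⊔ K ∈ CD G ∧ ((H ⊔ K : Subgroup G) : Set G) = (H : Set G) * (K : Set G) := by
  classical
  have hm : cdMeasure K = cdMeasure H := le_antisymm (hH K) (hK H)
  set M := cdMeasure H with hMdef
  set CH := Subgroup.centralizer (H : Set G) with hCH
  set CK := Subgroup.centralizer (K : Set G) with hCK
  set a := Nat.card ((H : Set G) * (K : Set G) : Set G) with ha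
  set b := Nat.card ↥(H ⊓ K) with hb
  set e := Nat.card ((CH : Set G) * (CK : Set G) : Set G) with he
  set S := Nat.card ↥(H ⊔ K) with hS
  set f := Nat.card (Subgroup.centralizer ((H ⊔ K : Subgroup G) : Set G)) with hf
  set c' := Nat.card (Subgroup.centralizer ((H ⊓ K : Subgroup G) : Set G)) with hc'
  have h1 : a * b = Nat.card H * Nat.card K := card_mul_inf H K
  have h2 : e * f = Nat.card CH * Nat.card CK := by
    rw [hf, centralizer_sup']
    exact card_mul_inf CH CK
  have h3 : a ≤ S := by
    rw [ha, hS, ← SetLike.coe_sort_coe (H ⊔ K)]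
    exact Nat.card_mono (Set.toFinite _) (mul_subset_sup H K)
  have h4 : e ≤ c' := by
    rw [he, hc', ← SetLike.coe_sort_coe (Subgroup.centralizer ((H ⊓ K : Subgroup G) : Set G))]
    exact Nat.card_mono (Set.toFinite _) (centralizer_mul_subset H K)
  have hMH : Nat.card ↥H * Nat.card ↥CH = M := by rw [hMdef]; rfl
  have hMK : Nat.card ↥K * Nat.card ↥CK = M := by rw [← hm]; rfl
  have hMM : (a * b) * (e * f) = M * M := by
    rw [h1, h2]
    calc Nat.card ↥H * Nat.card ↥K * (Nat.card ↥CH * Nat.card ↥CK)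
        = (Nat.card ↥H * Nat.card ↥CH) * (Nat.card ↥K * Nat.card ↥CK) := by ring
      _ = M * M := by rw [hMH, hMK]
  have hposM : 0 < M := by
    rw [hMdef]; unfold cdMeasure; exact Nat.mul_pos Nat.card_pos Nat.card_pos
  have hposb : 0 < b := Nat.card_pos
  have hposf : 0 < f := Nat.card_pos
  have hposc' : 0 < c' := Nat.card_pos
  have hposS : 0 < S := Nat.card_pos
  have hsle : S * f ≤ M := hH (H ⊔ K)
  have hile : b * c' ≤ M := hH (H ⊓ K)
  have hchain : (S * f) * (b * c') = M * M := by
    apply le_antisymm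
    · exact Nat.mul_le_mul hsle hile
    · calc M * M = (a * b) * (e * f) := hMM.symm
        _ ≤ (S * b) * (c' * f) :=
          Nat.mul_le_mul (Nat.mul_le_mul h3 le_rfl) (Nat.mul_le_mul h4 le_rfl)
        _ = (S * f) * (b * c') := by ring
  obtain ⟨hSf, hbc⟩ := nat_both_eq hsle hile hchain hposM
  have hsupCD : H ⊔ K ∈ CD G := by
    intro X
    calc cdMeasure X ≤ cdMeasure H := hH X
      _ = M := rfl
      _ = S * f := hSf.symm
      _ = cdMeasure (H ⊔ K) := rfl
  refine ⟨hsupCD, ?_⟩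
  have hae : a * e = S * c' := by
    have h5 : (a * e) * (b * f) = (S * c') * (b * f) := by
      calc (a * e) * (b * f) = (a * b) * (e * f) := by ring
        _ = M * M := hMM
        _ = (S * f) * (b * c') := hchain.symm
        _ = (S * c') * (b * f) := by ring
    exact Nat.eq_of_mul_eq_mul_right (Nat.mul_pos hposb hposf) h5
  have hec : e = c' := by
    have h7 : S * c' ≤ S * e := by
      rw [← hae]; exact Nat.mul_le_mul h3 le_rfl
    exact le_antisymm h4 (Nat.le_of_mul_le_mul_left h7 hposS)
  have haS : a = S := by
    have h8 := hae
    rw [hec] at h8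
    exact Nat.eq_of_mul_eq_mul_right hposc' h8
  apply (Set.eq_of_subset_of_ncard_le (mul_subset_sup H K) ?_ (Set.toFinite _)).symm
  rw [← Nat.card_coe_set_eq, ← Nat.card_coe_set_eq, SetLike.coe_sort_coe]
  exact haS.ge

end CDmain

section CDconj

variable {G : Type*} [Group G] [Fintype G]

lemma centralizer_image (φ : G ≃* G) (s : Set G) :
    Subgroup.centralizer (φ '' s) =
      Subgroup.map φ.toMonoidHom (Subgroup.centralizer s) := by
  ext x
  simp only [Subgroup.mem_centralizer_iff, Subgroup.mem_map]
  constructor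
  · intro hx
    refine ⟨φ.symm x, fun h hh => ?_, φ.apply_symm_apply x⟩
    have h1 := hx (φ h) ⟨h, hh, rfl⟩
    have h2 := congrArg φ.symm h1
    simpa [map_mul] using h2
  · rintro ⟨y, hy, rfl⟩ - ⟨h, hh, rfl⟩
    have := hy h hh
    calc φ h * φ.toMonoidHom y = φ (h * y) := by simp [map_mul]
      _ = φ (y * h) := by rw [this]
      _ = φ.toMonoidHom y * φ h := by simp [map_mul]

lemma cdMeasure_map (φ : G ≃* G) (H : Subgroup G) :
    cdMeasure (Subgroup.map φ.toMonoidHom H) = cdMeasure H := by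
  unfold cdMeasure
  congr 1
  · exact (Nat.card_congr (Subgroup.equivMapOfInjective H _ φ.injective).toEquiv).symm
  · rw [Subgroup.coe_map, show ⇑φ.toMonoidHom = ⇑φ from rfl, centralizer_image]
    exact (Nat.card_congr (Subgroup.equivMapOfInjective _ _ φ.injective).toEquiv).symm

lemma CD_map (φ : G ≃* G) {H : Subgroup G} (hH : H ∈ CD G) :
    Subgroup.map φ.toMonoidHom H ∈ CD G := by
  intro K
  have hKK : Subgroup.map φ.toMonoidHom (Subgroup.map φ.symm.toMonoidHom K) = K := by
    rw [Subgroup.map_map]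
    have : (φ.toMonoidHom.comp φ.symm.toMonoidHom) = MonoidHom.id G := by
      ext x; simp
    rw [this, Subgroup.map_id]
  calc cdMeasure K = cdMeasure (Subgroup.map φ.symm.toMonoidHom K) :=
        (congrArg cdMeasure hKK).symm.trans (cdMeasure_map φ _)
    _ ≤ cdMeasure H := hH _
    _ = cdMeasure (Subgroup.map φ.toMonoidHom H) := (cdMeasure_map φ H).symm

lemma cdMeasure_bot_eq : cdMeasure (⊥ : Subgroup G) = Nat.card G := by
  unfold cdMeasure
  have h1 : Subgroup.centralizer ((⊥ : Subgroup G) : Set G) = ⊤ := by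
    rw [eq_top_iff']
    intro x
    rw [Subgroup.mem_centralizer_iff]
    intro h hh
    rw [Subgroup.coe_bot, Set.mem_singleton_iff] at hh
    subst hh; simp
  rw [h1, Subgroup.card_bot, Subgroup.card_top, one_mul]

lemma sub_eq_of_le_card {H K : Subgroup G} (h : H ≤ K) (hc : Nat.card K ≤ Nat.card H) :
    H = K := by
  apply SetLike.coe_injective
  apply Set.eq_of_subset_of_ncard_le (SetLike.coe_subset_coe.mpr h) _ (Set.toFinite _)
  rw [← Nat.card_coe_set_eq, ← Nat.card_coe_set_eq, SetLike.coe_sort_coe,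
    SetLike.coe_sort_coe]
  exact hc

end CDconj

theorem stmt15 {G : Type*} [Group G] [Fintype G]
    (hbot : (⊥ : Subgroup G) ∈ CD G)
    (hindec : ¬ ∃ H K : Subgroup G, H ≠ ⊥ ∧ K ≠ ⊥ ∧ H.Normal ∧ K.Normal ∧
        H ⊓ K = ⊥ ∧ H ⊔ K = ⊤)
    (hnotsimple : CD G ≠ {⊥, ⊤})
    (B : Subgroup G)
    (hB : B ∈ CD G ∧ B ≠ ⊤ ∧ ∀ X ∈ CD G, X ≠ ⊤ → B ≤ X → X = B) :
    Subgroup.centralizer (B : Set G) ≤ B ∧ B.Normal ∧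
      ∃ p q : Nat, p.Prime ∧ q.Prime ∧ p ≠ q ∧ p ∣ B.index ∧ q ∣ B.index := by
  classical
  obtain ⟨hBCD, hBtop, hBmax⟩ := hB
  set C := Subgroup.centralizer (B : Set G) with hCdef
  -- measure of CD members is |G|
  have hmeas : ∀ X ∈ CD G, cdMeasure X = Nat.card G := by
    intro X hX
    rw [← cdMeasure_bot_eq]
    exact le_antisymm (hbot X) (hX ⊥)
  -- the center is trivial
  have hcenter : Subgroup.center G = ⊥ := by
    have h1 : cdMeasure (⊤ : Subgroup G) ≤ Nat.card G := by
      rw [← cdMeasure_bot_eq]; exact hbot ⊤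
    unfold cdMeasure at h1
    rw [Subgroup.card_top, Subgroup.coe_top, Subgroup.centralizer_univ] at h1
    have h2 : Nat.card (Subgroup.center G) ≤ 1 := by
      have hG : 0 < Nat.card G := Nat.card_pos
      have h1' : Nat.card G * Nat.card (Subgroup.center G) ≤ Nat.card G * 1 := by
        rwa [mul_one]
      exact Nat.le_of_mul_le_mul_left h1' hG
    have h3 : Nat.card (Subgroup.center G) = 1 :=
      le_antisymm h2 Nat.card_pos
    exact Subgroup.card_eq_one.mp h3
  -- ⊤ is a CD member
  have htopCD : (⊤ : Subgroup G) ∈ CD G := by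
    intro K
    have : cdMeasure (⊤ : Subgroup G) = Nat.card G := by
      unfold cdMeasure
      rw [Subgroup.card_top, Subgroup.coe_top, Subgroup.centralizer_univ, hcenter,
        Subgroup.card_bot, mul_one]
    rw [this, ← cdMeasure_bot_eq]
    exact hbot K
  -- C is a CD member
  have hCCD : C ∈ CD G := by
    intro K
    have hle : B ≤ Subgroup.centralizer (C : Set G) :=
      Subgroup.le_centralizer_iff.mpr le_rfl
    have h1 : cdMeasure B ≤ cdMeasure C := by
      unfold cdMeasure
      rw [mul_comm (Nat.card B)]
      exact Nat.mul_le_mul le_rfl (Subgroup.card_le_of_le hle)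
    exact (hBCD K).trans h1
  -- B nontrivial (else CD(G) = {⊥, ⊤})
  have hBbot : B ≠ ⊥ := by
    intro hb
    apply hnotsimple
    ext X
    simp only [Set.mem_insert_iff, Set.mem_singleton_iff]
    constructor
    · intro hX
      by_cases hXt : X = ⊤
      · exact Or.inr hXt
      · exact Or.inl (hb ▸ hBmax X hX hXt (hb ▸ bot_le))
    · rintro (rfl | rfl)
      · exact hbot
      · exact htopCD
  -- PART 1 : C ≤ B
  have hCB : C ≤ B := by
    by_contra hCB
    have hsup := sup_CD hBCD hCCD
    have hBCtop : B ⊔ C = ⊤ := by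
      by_contra h
      exact hCB (le_sup_right.trans (hBmax _ hsup.1 h le_sup_left).le)
    -- commuting facts
    have hcomm : ∀ x ∈ B, ∀ y ∈ C, x * y = y * x := by
      intro x hx y hy
      exact (Subgroup.mem_centralizer_iff.mp hy) x hx
    -- B ⊓ C = ⊥
    have hBCbot : B ⊓ C = ⊥ := by
      rw [eq_bot_iff]
      intro x hx
      obtain ⟨hx1, hx2⟩ := Subgroup.mem_inf.mp hx
      have h1 : x ∈ Subgroup.centralizer ((B ⊔ C : Subgroup G) : Set G) := by
        rw [centralizer_sup']
        refine Subgroup.mem_inf.mpr ⟨hx2, ?_⟩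
        exact (Subgroup.le_centralizer_iff.mpr le_rfl) hx1
      rw [hBCtop, Subgroup.coe_top, Subgroup.centralizer_univ, hcenter] at h1
      exact h1
    -- decomposition of arbitrary elements
    have hdecomp : ∀ g : G, ∃ x ∈ B, ∃ y ∈ C, x * y = g := by
      intro g
      have hg : g ∈ ((B ⊔ C : Subgroup G) : Set G) := by
        rw [hBCtop]; exact Set.mem_univ g
      rw [hsup.2] at hg
      exact hg
    -- B and C are normal
    have hBn : B.Normal := by
      constructor
      intro n hn g
      obtain ⟨x, hx, y, hy, rfl⟩ := hdecomp g
      have hyn : y * n * y⁻¹ = n := by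
        have hcn := hcomm n hn y hy
        rw [← hcn]
        group
      have : x * y * n * (x * y)⁻¹ = x * (y * n * y⁻¹) * x⁻¹ := by group
      rw [this, hyn]
      exact B.mul_mem (B.mul_mem hx hn) (B.inv_mem hx)
    have hCn : C.Normal := by
      constructor
      intro n hn g
      obtain ⟨x, hx, y, hy, rfl⟩ := hdecomp g
      have hyC : y * n * y⁻¹ ∈ C := C.mul_mem (C.mul_mem hy hn) (C.inv_mem hy)
      have hxy : x * (y * n * y⁻¹) * x⁻¹ = y * n * y⁻¹ := by
        have hc2 := hcomm x hx _ hyC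
        rw [hc2]
        group
      have : x * y * n * (x * y)⁻¹ = x * (y * n * y⁻¹) * x⁻¹ := by group
      rw [this, hxy]
      exact hyC
    by_cases hCbot : C = ⊥
    · exact hCB (hCbot ▸ bot_le)
    · exact hindec ⟨B, C, hBbot, hCbot, hBn, hCn, hBCbot, hBCtop⟩
  -- PART 2 : B is normal
  have hBnormal : B.Normal := by
    have key : ∀ g : G, Subgroup.map (MulAut.conj g).toMonoidHom B = B := by
      intro g
      by_contra hneD
      set D := Subgroup.map (MulAut.conj g).toMonoidHom B with hDdef
      have hDCD : D ∈ CD G := CD_map (MulAut.conj g) hBCD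
      have hcard : Nat.card D = Nat.card B :=
        (Nat.card_congr (Subgroup.equivMapOfInjective B _ (MulAut.conj g).injective).toEquiv).symm
      have hDBtop : D ⊔ B = ⊤ := by
        by_contra h
        have hDB := hBmax _ (sup_CD hDCD hBCD).1 h le_sup_right
        apply hneD
        exact sub_eq_of_le_card (le_sup_left.trans hDB.le) (hcard.symm.le)
      -- write g = (g h g⁻¹) * y with h ∈ B, y ∈ B
      have hg : g ∈ ((D ⊔ B : Subgroup G) : Set G) := by
        rw [hDBtop]; exact Set.mem_univ g
      rw [(sup_CD hDCD hBCD).2] at hg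
      obtain ⟨x, hx, y, hy, hxy⟩ := hg
      rw [SetLike.mem_coe, hDdef, Subgroup.mem_map] at hx
      obtain ⟨h, hh, rfl⟩ := hx
      have hxy' : (g * h * g⁻¹) * y = g := hxy
      -- from (g h g⁻¹) y = g we get g = y * h
      have hgyh : g = y * h := by
        have h1 : y = g * h⁻¹ := by
          apply mul_left_cancel (a := g * h * g⁻¹)
          rw [hxy']
          group
        rw [h1]; group
      have hgB : g ∈ B := hgyh ▸ B.mul_mem (SetLike.mem_coe.mp hy) hh
      apply hneD
      ext z
      rw [hDdef, Subgroup.mem_map]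
      constructor
      · rintro ⟨w, hw, rfl⟩
        have : (MulAut.conj g).toMonoidHom w = g * w * g⁻¹ := rfl
        rw [this]
        exact B.mul_mem (B.mul_mem hgB hw) (B.inv_mem hgB)
      · intro hz
        refine ⟨g⁻¹ * z * g, ?_, ?_⟩
        · exact B.mul_mem (B.mul_mem (B.inv_mem hgB) hz) hgB
        · show g * (g⁻¹ * z * g) * g⁻¹ = z
          group
    constructor
    intro n hn g
    have := key g
    rw [← this]
    exact ⟨n, hn, rfl⟩
  -- C is normal
  have hCnormal : C.Normal := by
    constructor
    intro x hx g
    rw [hCdef, Subgroup.mem_centralizer_iff] at hx ⊢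
    intro h hh
    have hh' : g⁻¹ * h * g ∈ B := by
      have := hBnormal.conj_mem h (SetLike.mem_coe.mp hh) g⁻¹
      simpa using this
    have hc := hx (g⁻¹ * h * g) hh'
    calc h * (g * x * g⁻¹) = g * ((g⁻¹ * h * g) * x) * g⁻¹ := by group
      _ = g * (x * (g⁻¹ * h * g)) * g⁻¹ := by rw [hc]
      _ = (g * x * g⁻¹) * h := by group
  -- PART 3 : at least two primes divide the index
  refine ⟨hCB, hBnormal, ?_⟩
  by_contra hcon
  push_neg at hcon
  -- |C| = index of B
  have hmB : Nat.card B * Nat.card C = Nat.card G := by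
    have := hmeas B hBCD
    unfold cdMeasure at this
    exact this
  have hCindex : Nat.card C = B.index := by
    have h1 := Subgroup.card_mul_index B
    exact Nat.eq_of_mul_eq_mul_left Nat.card_pos (hmB.trans h1.symm)
  have hindex1 : B.index ≠ 1 := fun h => hBtop (Subgroup.index_eq_one.mp h)
  have hindex0 : B.index ≠ 0 := Subgroup.index_ne_zero_of_finite
  set p := (B.index).minFac with hpdef
  have hp : p.Prime := Nat.minFac_prime hindex1
  have hpd : p ∣ B.index := Nat.minFac_dvd _
  have huniq : ∀ {d : ℕ}, d.Prime → d ∣ B.index → d = p := by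
    intro d hd hdd
    by_contra hne
    exact hcon p d hp hd (Ne.symm hne) hpd hdd
  have hpow : B.index = p ^ (B.index).primeFactorsList.length :=
    Nat.eq_prime_pow_of_unique_prime_dvd hindex0 huniq
  haveI : Fact p.Prime := ⟨hp⟩
  obtain ⟨P⟩ : Nonempty (Sylow p G) := inferInstance
  -- B ⊔ P = ⊤
  have hPsup : B ⊔ (P : Subgroup G) = ⊤ := by
    have hd1 : (B ⊔ (P : Subgroup G)).index ∣ B.index := Subgroup.index_dvd_of_le le_sup_left
    have hd2 : (B ⊔ (P : Subgroup G)).index ∣ (P : Subgroup G).index :=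
      Subgroup.index_dvd_of_le le_sup_right
    rw [hpow] at hd1
    obtain ⟨j, hj, hjeq⟩ := (Nat.dvd_prime_pow hp).mp hd1
    have hnot : ¬ p ∣ (P : Subgroup G).index := P.not_dvd_index
    have hj0 : j = 0 := by
      by_contra h
      exact hnot (dvd_trans (hjeq ▸ dvd_pow_self p h) hd2)
    rw [hj0, pow_zero] at hjeq
    exact Subgroup.index_eq_one.mp hjeq
  -- conjugation action of P on C
  letI actP : MulAction ↥(P : Subgroup G) ↥C :=
    { smul := fun y x => ⟨(y : G) * (x : G) * (y : G)⁻¹,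
        hCnormal.conj_mem (x : G) x.2 (y : G)⟩
      one_smul := fun x => Subtype.ext (by
        show ((1 : ↥(P : Subgroup G)) : G) * (x : G) * ((1 : ↥(P : Subgroup G)) : G)⁻¹ = (x : G)
        simp)
      mul_smul := fun y z x => Subtype.ext (by
        show ((y * z : ↥(P : Subgroup G)) : G) * (x : G) * ((y * z : ↥(P : Subgroup G)) : G)⁻¹
          = (y : G) * ((z : G) * (x : G) * (z : G)⁻¹) * (y : G)⁻¹
        push_cast
        group) }
  have hPpgroup : IsPGroup p ↥(P : Subgroup G) := P.isPGroup'
  have hfix : Nat.card ↥C ≡ Nat.card (MulAction.fixedPoints ↥(P : Subgroup G) ↥C) [MOD p] :=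
    hPpgroup.card_modEq_card_fixedPoints ↥C
  have hpC : p ∣ Nat.card ↥C := by rw [hCindex]; exact hpd
  have hpFix : p ∣ Nat.card (MulAction.fixedPoints ↥(P : Subgroup G) ↥C) :=
    (Nat.modEq_zero_iff_dvd).mp ((hfix.symm.trans (Nat.modEq_zero_iff_dvd.mpr hpC)))
  have h1fix : (⟨1, C.one_mem⟩ : ↥C) ∈ MulAction.fixedPoints ↥(P : Subgroup G) ↥C := by
    intro y
    apply Subtype.ext
    show (y : G) * 1 * (y : G)⁻¹ = 1
    group
  haveI : Nonempty ↥(MulAction.fixedPoints ↥(P : Subgroup G) ↥C) := ⟨⟨_, h1fix⟩⟩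
  have hposFix : 0 < Nat.card ↥(MulAction.fixedPoints ↥(P : Subgroup G) ↥C) := Nat.card_pos
  have h2lt : 1 < Nat.card ↥(MulAction.fixedPoints ↥(P : Subgroup G) ↥C) := by
    have := Nat.le_of_dvd hposFix hpFix
    have := hp.two_le
    omega
  haveI : Nontrivial ↥(MulAction.fixedPoints ↥(P : Subgroup G) ↥C) :=
    Finite.one_lt_card_iff_nontrivial.mp h2lt
  obtain ⟨x, hxne⟩ :=
    exists_ne (⟨⟨1, C.one_mem⟩, h1fix⟩ : ↥(MulAction.fixedPoints ↥(P : Subgroup G) ↥C))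
  set z : G := ((x : ↥C) : G) with hzdef
  have hz1 : z ≠ 1 := by
    intro h
    exact hxne (Subtype.ext (Subtype.ext h))
  have hzC : z ∈ C := (x : ↥C).2
  have hzP : ∀ h ∈ (P : Subgroup G), h * z = z * h := by
    intro h hh
    have hfx := x.2 ⟨h, hh⟩
    have := congrArg (Subtype.val) hfx
    have h2 : h * z * h⁻¹ = z := this
    calc h * z = (h * z * h⁻¹) * h := by group
      _ = z * h := by rw [h2]
  have hzcent : z ∈ Subgroup.centralizer (((B ⊔ (P : Subgroup G)) : Subgroup G) : Set G) := by
    rw [centralizer_sup']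
    refine Subgroup.mem_inf.mpr ⟨hzC, ?_⟩
    rw [Subgroup.mem_centralizer_iff]
    intro h hh
    exact hzP h hh
  rw [hPsup, Subgroup.coe_top, Subgroup.centralizer_univ, hcenter] at hzcent
  exact hz1 hzcent
end

section
/- Let p be a prime, let P be a nontrivial finite p-group, and let G be a finite group containing P as a normal subgroup with a complement T (so G = PT, P ∩ T = 1, and T acts on P by conjugation). Suppose that the conjugation action of T on Z(P) is faithful (only the identity of T centralizes Z(P)) and irreducible (the only T-invariant subgroups of Z(P) are 1 and Z(P)). If A is a nontrivial abelian normal subgroup of G, then Z(P) ≤ A ≤ C_G(A) ≤ P. -/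
open Pointwise

/-- A nontrivial normal subgroup of a finite p-group meets the center nontrivially. -/
lemma aux_pgroup_normal_center {p : ℕ} [Fact p.Prime] {Q : Type*} [Group Q] [Finite Q]
    (hQ : IsPGroup p Q) {K : Subgroup Q} (hKn : K.Normal) (hK : K ≠ ⊥) :
    ∃ k : Q, k ∈ K ∧ k ≠ 1 ∧ k ∈ Subgroup.center Q := by
  haveI := hKn
  have hKp : IsPGroup p K := hQ.to_subgroup K
  haveI : Nontrivial K := K.nontrivial_iff_ne_bot.mpr hK
  have hcard : p ∣ Nat.card K := by
    obtain ⟨n, hn0, hn⟩ := hKp.nontrivial_iff_card.mp inferInstance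
    exact hn ▸ dvd_pow_self p hn0.ne'
  have hQ' : IsPGroup p (ConjAct Q) := hQ.of_equiv ConjAct.toConjAct
  have h1 : (1 : K) ∈ MulAction.fixedPoints (ConjAct Q) K := fun g => smul_one g
  obtain ⟨b, hb, hb1⟩ := hQ'.exists_fixed_point_of_prime_dvd_card_of_fixed_point (α := K) hcard h1
  refine ⟨b, b.2, ?_, ?_⟩
  · intro h
    exact hb1 (Subtype.ext h).symm
  · rw [Subgroup.mem_center_iff]
    intro g
    have := hb (ConjAct.toConjAct g)
    have hc : g * (b : Q) * g⁻¹ = b := by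
      have := congrArg (Subtype.val) this
      rwa [ConjAct.Subgroup.val_conj_smul, ConjAct.toConjAct_smul] at this
    calc g * b = (g * b * g⁻¹) * g := by group
    _ = b * g := by rw [hc]

theorem stmt18 {G : Type*} [Group G] [Fintype G] (p : Nat) (hp : p.Prime)
    (P T : Subgroup G) (hPnormal : P.Normal)
    (hPp : ∃ k : Nat, Nat.card P = p ^ k) (hPne : P ≠ ⊥)
    (hint : P ⊓ T = ⊥) (hprod : (P : Set G) * (T : Set G) = Set.univ)
    (ZP : Subgroup G) (hZP : ZP = Subgroup.map P.subtype (Subgroup.center P))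
    (hfaithful : ∀ t ∈ T, (∀ z ∈ ZP, t * z * t⁻¹ = z) → t = 1)
    (hirred : ∀ N : Subgroup G, N ≤ ZP →
        (∀ t ∈ T, ∀ x ∈ N, t * x * t⁻¹ ∈ N) → N = ⊥ ∨ N = ZP)
    (A : Subgroup G) (hAne : A ≠ ⊥) (hAnormal : A.Normal)
    (hAab : ∀ x ∈ A, ∀ y ∈ A, Commute x y) :
    ZP ≤ A ∧ A ≤ Subgroup.centralizer (A : Set G) ∧
      Subgroup.centralizer (A : Set G) ≤ P := by
  haveI := Fact.mk hp
  obtain ⟨k, hk⟩ := hPp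
  have hPpg : IsPGroup p P := IsPGroup.of_card hk
  have hZPle : ZP ≤ P := by
    rw [hZP]; exact Subgroup.map_subtype_le _
  -- Elements of P centralize ZP
  have hPcent : ∀ x ∈ P, ∀ z ∈ ZP, x * z = z * x := by
    intro x hx z hz
    rw [hZP] at hz
    obtain ⟨z', hz', rfl⟩ := hz
    have := (Subgroup.mem_center_iff.mp hz' ⟨x, hx⟩)
    exact congrArg Subtype.val this
  -- Anything centralizing ZP lies in P
  have key : ∀ c : G, (∀ z ∈ ZP, c * z = z * c) → c ∈ P := by
    intro c hc
    have : c ∈ ((P : Set G) * (T : Set G)) := by rw [hprod]; trivial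
    obtain ⟨x, hx, t, ht, hxt⟩ := this
    have ht1 : t = 1 := by
      apply hfaithful t ht
      intro z hz
      have hxz := hPcent x hx z hz
      have hct : t = x⁻¹ * c := by rw [← hxt]; group
      rw [hct]
      have : c * z = z * c := hc z hz
      calc x⁻¹ * c * z * (x⁻¹ * c)⁻¹ = x⁻¹ * (c * z * c⁻¹) * x := by group
      _ = x⁻¹ * z * x := by rw [show c * z * c⁻¹ = z by rw [this]; group]
      _ = x⁻¹ * (x * z * x⁻¹) * x := by rw [show x * z * x⁻¹ = z by rw [hxz]; group]
      _ = z := by group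
    have hxt' : x * t = c := hxt
    rw [ht1, mul_one] at hxt'
    rwa [← hxt']
  -- Step 1: A ⊓ P ≠ ⊥
  have hAP : A ⊓ P ≠ ⊥ := by
    intro hbot
    apply hAne
    rw [eq_bot_iff]
    intro a ha
    -- a commutes with every element of P
    have hcomm : ∀ g ∈ P, a * g = g * a := by
      intro g hg
      have hmem : a * g * a⁻¹ * g⁻¹ ∈ A ⊓ P := by
        constructor
        · have : g * a⁻¹ * g⁻¹ ∈ A := hAnormal.conj_mem _ (A.inv_mem ha) g
          have := A.mul_mem ha this
          change _ ∈ A; convert this using 1; group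
        · have : a * g * a⁻¹ ∈ P := hPnormal.conj_mem _ hg a
          exact P.mul_mem this (P.inv_mem hg)
      rw [hbot, Subgroup.mem_bot] at hmem
      have : a * g * a⁻¹ * g⁻¹ = 1 := hmem
      calc a * g = (a * g * a⁻¹ * g⁻¹) * (g * a) := by group
      _ = g * a := by rw [this]; group
    have haP : a ∈ P := key a (fun z hz => hcomm z (hZPle hz))
    have : a ∈ A ⊓ P := ⟨ha, haP⟩
    rw [hbot, Subgroup.mem_bot] at this
    simp [this]
  -- Step 2: find a nontrivial element of A ⊓ ZP
  haveI : (A ⊓ P).Normal := Subgroup.normal_inf_normal A P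
  have hKn : ((A ⊓ P).subgroupOf P).Normal := Subgroup.Normal.subgroupOf ‹(A ⊓ P).Normal› P
  have hKne : (A ⊓ P).subgroupOf P ≠ ⊥ := by
    rw [Ne, Subgroup.subgroupOf_eq_bot]
    intro hd
    exact hAP (hd.eq_bot_of_le inf_le_right)
  obtain ⟨b, hbK, hb1, hbZ⟩ := aux_pgroup_normal_center hPpg hKn hKne
  have hbA : (b : G) ∈ A := ((Subgroup.mem_subgroupOf.mp hbK) : (b : G) ∈ A ⊓ P).1
  have hbZP : (b : G) ∈ ZP := by
    rw [hZP]; exact ⟨b, hbZ, rfl⟩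
  have hbne : (b : G) ≠ 1 := by
    intro h; exact hb1 (Subtype.ext h)
  -- A ⊓ ZP is T-invariant, nontrivial, so equals ZP
  haveI : ZP.Normal := by
    rw [hZP]; exact ConjAct.normal_of_characteristic_of_normal
  have hN := hirred (A ⊓ ZP) inf_le_right (by
    intro t ht x hx
    exact ⟨hAnormal.conj_mem _ hx.1 t, ‹ZP.Normal›.conj_mem _ hx.2 t⟩)
  have hZA : ZP ≤ A := by
    rcases hN with h | h
    · exfalso
      have : (b : G) ∈ A ⊓ ZP := ⟨hbA, hbZP⟩
      rw [h, Subgroup.mem_bot] at this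
      exact hbne this
    · intro z hz
      rw [← h] at hz
      exact hz.1
  refine ⟨hZA, ?_, ?_⟩
  · intro a ha
    rw [Subgroup.mem_centralizer_iff]
    intro g hg
    exact (hAab g hg a ha)
  · intro c hc
    rw [Subgroup.mem_centralizer_iff] at hc
    exact key c (fun z hz => (hc z (hZA hz)).symm)
end
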